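/- Two pei-injections f, f': S → S of an orthohedral set S are in the same orbit under the right action of pei(S) (i.e., f' = f∘g for some pei-permutation g of S) if and only if S − f(S) and S − f'(S) are pei-isomorphic. -/

import Mathlib

open Pointwise

namespace PeiPaper

/-- Points of the face of the standard orthant spanned by the canonical basis vectors in `Y`. -/
def stdFace (N : ℕ) (Y : Finset (Fin N)) : Set (Fin N → ℤ) :=
  {v | (∀ i, 0 ≤ v i) ∧ ∀ i, i ∉ Y → v i = 0}

/-- Integral orthogonal matrix. -/
def IsOrthMat {N : ℕ} (A : Matrix (Fin N) (Fin N) ℤ) : Prop :=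
  A * A.transpose = 1

/-- `L` is an integral orthant of rank `k` in `ℤ^N`: an affine-orthogonal image of a
rank-`k` face of the standard orthant. -/
def IsOrthantOfRank {N : ℕ} (L : Set (Fin N → ℤ)) (k : ℕ) : Prop :=
  ∃ (a : Fin N → ℤ) (A : Matrix (Fin N) (Fin N) ℤ) (Y : Finset (Fin N)),
    IsOrthMat A ∧ Y.card = k ∧ L = (fun v => a + A.mulVec v) '' stdFace N Y

def IsOrthant {N : ℕ} (L : Set (Fin N → ℤ)) : Prop := ∃ k, IsOrthantOfRank L k

/-- `S` is orthohedral: a finite union of integral orthants. -/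
def IsOrthohedral {N : ℕ} (S : Set (Fin N → ℤ)) : Prop :=
  ∃ 𝓛 : Set (Set (Fin N → ℤ)), 𝓛.Finite ∧ (∀ L ∈ 𝓛, IsOrthant L) ∧ S = ⋃₀ 𝓛

/-- The rank of a set: the maximal rank of an orthant contained in it. -/
noncomputable def orthRank {N : ℕ} (S : Set (Fin N → ℤ)) : ℕ :=
  sSup {k | ∃ L, IsOrthantOfRank L k ∧ L ⊆ S}

/-- Commensurability: the intersection is nonempty and has the same rank as both sets. -/
def Commensurable {N : ℕ} (L L' : Set (Fin N → ℤ)) : Prop :=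
  (L ∩ L').Nonempty ∧ orthRank L = orthRank (L ∩ L') ∧ orthRank L' = orthRank (L ∩ L')

/-- The rank-`k` orthants contained in `S`. -/
def germSet {N : ℕ} (S : Set (Fin N → ℤ)) (k : ℕ) : Set (Set (Fin N → ℤ)) :=
  {L | IsOrthantOfRank L k ∧ L ⊆ S}

/-- The rank-`k` germs of `S`: commensurability classes of rank-`k` orthants of `S`. -/
def Germ {N : ℕ} (S : Set (Fin N → ℤ)) (k : ℕ) : Type _ :=
  Quot (fun L L' : germSet S k => Commensurable L.1 L'.1)

def germOf {N : ℕ} (S : Set (Fin N → ℤ)) (k : ℕ) (L : germSet S k) : Germ S k :=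
  Quot.mk _ L

/-- The number of rank-`k` germs of `S` (as a natural number; `0` if infinite). -/
noncomputable def heightAt {N : ℕ} (S : Set (Fin N → ℤ)) (k : ℕ) : ℕ :=
  Nat.card (Germ S k)

/-- The height of an orthohedral set: the number of germs of maximal rank. -/
noncomputable def height {N : ℕ} (S : Set (Fin N → ℤ)) : ℕ :=
  heightAt S (orthRank S)

/-- `f` is (the restriction of) an isometry of `ℤ^N` on `L`. -/
def IsometricOn {N : ℕ} (f : (Fin N → ℤ) → (Fin N → ℤ)) (L : Set (Fin N → ℤ)) : Prop :=
  ∃ (a : Fin N → ℤ) (A : Matrix (Fin N) (Fin N) ℤ),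
    IsOrthMat A ∧ ∀ x ∈ L, f x = a + A.mulVec x

/-- `f` is (the restriction of) a translation on `L`. -/
def TranslationOn {N : ℕ} (f : (Fin N → ℤ) → (Fin N → ℤ)) (L : Set (Fin N → ℤ)) : Prop :=
  ∃ a : Fin N → ℤ, ∀ x ∈ L, f x = a + x

/-- `f` is a piecewise-Euclidean-isometric map on `S`. -/
def IsPeiMapOn {N : ℕ} (S : Set (Fin N → ℤ)) (f : (Fin N → ℤ) → (Fin N → ℤ)) : Prop :=
  ∃ 𝓛 : Set (Set (Fin N → ℤ)), 𝓛.Finite ∧ (∀ L ∈ 𝓛, IsOrthant L) ∧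
    S = ⋃₀ 𝓛 ∧ 𝓛.PairwiseDisjoint id ∧ ∀ L ∈ 𝓛, IsometricOn f L

/-- `f` is a piecewise-Euclidean-translation map on `S`. -/
def IsPetMapOn {N : ℕ} (S : Set (Fin N → ℤ)) (f : (Fin N → ℤ) → (Fin N → ℤ)) : Prop :=
  ∃ 𝓛 : Set (Set (Fin N → ℤ)), 𝓛.Finite ∧ (∀ L ∈ 𝓛, IsOrthant L) ∧
    S = ⋃₀ 𝓛 ∧ 𝓛.PairwiseDisjoint id ∧ ∀ L ∈ 𝓛, TranslationOn f L

def IsPeiIso {N : ℕ} (S S' : Set (Fin N → ℤ)) (f : (Fin N → ℤ) → (Fin N → ℤ)) : Prop :=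
  IsPeiMapOn S f ∧ Set.InjOn f S ∧ f '' S = S'

def PeiIsomorphic {N : ℕ} (S S' : Set (Fin N → ℤ)) : Prop := ∃ f, IsPeiIso S S' f

def IsPetIso {N : ℕ} (S S' : Set (Fin N → ℤ)) (f : (Fin N → ℤ) → (Fin N → ℤ)) : Prop :=
  IsPetMapOn S f ∧ Set.InjOn f S ∧ f '' S = S'

def PetIsomorphic {N : ℕ} (S S' : Set (Fin N → ℤ)) : Prop := ∃ f, IsPetIso S S' f

/-- A pei-permutation of `S`: a permutation of `ℤ^N` supported on `S` which is pei on `S`. -/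
def IsPeiPerm {N : ℕ} (S : Set (Fin N → ℤ)) (g : Equiv.Perm (Fin N → ℤ)) : Prop :=
  IsPeiMapOn S ⇑g ∧ ∀ x ∉ S, g x = x

/-- The element `g` has rank at most `k`: it is supported on an orthohedral set of rank `≤ k`. -/
def rankLE {N : ℕ} (g : Equiv.Perm (Fin N → ℤ)) (k : ℕ) : Prop :=
  ∃ T : Set (Fin N → ℤ), IsOrthohedral T ∧ orthRank T ≤ k ∧ ∀ x ∉ T, g x = x

/-- `g` fixes every rank-`k` germ of `S`. -/
def FixesGerm {N : ℕ} (S : Set (Fin N → ℤ)) (k : ℕ) (g : Equiv.Perm (Fin N → ℤ)) : Prop :=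
  ∀ L, IsOrthantOfRank L k → L ⊆ S →
    ∃ L', IsOrthantOfRank L' k ∧ L' ⊆ L ∧ Commensurable L L' ∧
      IsometricOn (⇑g) L' ∧ Commensurable (⇑g '' L') L

/-- `g` fixes every rank-`k` germ of `S` and acts on its tangent coset by a translation. -/
def TranslatesGerm {N : ℕ} (S : Set (Fin N → ℤ)) (k : ℕ) (g : Equiv.Perm (Fin N → ℤ)) : Prop :=
  ∀ L, IsOrthantOfRank L k → L ⊆ S →
    ∃ L' a, IsOrthantOfRank L' k ∧ L' ⊆ L ∧ Commensurable L L' ∧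
      (∀ x ∈ L', g x = a + x) ∧ Commensurable (⇑g '' L') L

/-- `σ` is the map induced by `g` on the rank-`k` germs of `S`. -/
def InducesGermMap {N : ℕ} (S : Set (Fin N → ℤ)) (k : ℕ) (g : Equiv.Perm (Fin N → ℤ))
    (σ : Germ S k → Germ S k) : Prop :=
  ∀ L : germSet S k, ∃ (L'' : Set (Fin N → ℤ)) (M : germSet S k),
    IsOrthantOfRank L'' k ∧ L'' ⊆ L.1 ∧ Commensurable L.1 L'' ∧
    M.1 = ⇑g '' L'' ∧ σ (germOf S k L) = germOf S k M

/-- A finitary permutation which is even (has sign `1` on a finite invariant subset). -/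
def IsEvenFinitary {α : Type*} (σ : Equiv.Perm α) : Prop :=
  ∃ (F : Finset α) (σF : Equiv.Perm F),
    (∀ a ∉ F, σ a = a) ∧ (∀ a : F, σ (a : α) = (σF a : α)) ∧
    @Equiv.Perm.sign F (Classical.decEq _) inferInstance σF = 1

/-- `g` induces an even finitary permutation on the rank-`k` germs of `S`. -/
def IsEvenOnGerms {N : ℕ} (S : Set (Fin N → ℤ)) (k : ℕ) (g : Equiv.Perm (Fin N → ℤ)) : Prop :=
  ∃ σ : Equiv.Perm (Germ S k), InducesGermMap S k g ⇑σ ∧ IsEvenFinitary σ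

/-- Ordering of germs (of arbitrary ranks): `p ≤ q` if they have representatives `L ⊆ L'`. -/
def germLE {N : ℕ} (S : Set (Fin N → ℤ)) (p q : Σ k, Germ S k) : Prop :=
  ∃ (L : germSet S p.1) (L' : germSet S q.1),
    germOf S p.1 L = p.2 ∧ germOf S q.1 L' = q.2 ∧ L.1 ⊆ L'.1

/-- A maximal germ of `S`. -/
def IsMaxGerm {N : ℕ} (S : Set (Fin N → ℤ)) (p : Σ k, Germ S k) : Prop :=
  ∀ q, germLE S p q → germLE S q p

/-- A `0`-based orthant. -/
def IsBasedOrthant {N : ℕ} (L0 : Set (Fin N → ℤ)) : Prop :=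
  ∃ (A : Matrix (Fin N) (Fin N) ℤ) (Y : Finset (Fin N)),
    IsOrthMat A ∧ L0 = (fun v => A.mulVec v) '' stdFace N Y

/-- Two (oriented) parallel orthants. -/
def ParallelOrthants {N : ℕ} (L L' : Set (Fin N → ℤ)) : Prop :=
  ∃ a : Fin N → ℤ, L' = a +ᵥ L

/-- The indicator image `S_τ` of `S`: the union of the `0`-based parallel translates of
the orthants contained in `S`. -/
def indicatorImage {N : ℕ} (S : Set (Fin N → ℤ)) : Set (Fin N → ℤ) :=
  ⋃₀ {L0 | IsBasedOrthant L0 ∧ ∃ a : Fin N → ℤ, (a +ᵥ L0) ⊆ S}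

/-- The height function `h_S`: the number of maximal germs of `S` whose indicator is `L0`. -/
noncomputable def hFun {N : ℕ} (S : Set (Fin N → ℤ)) (L0 : Set (Fin N → ℤ)) : ℕ :=
  Nat.card {p : Σ k, Germ S k //
    IsMaxGerm S p ∧ ∃ L : germSet S p.1, germOf S p.1 L = p.2 ∧ ∃ a : Fin N → ℤ, L.1 = a +ᵥ L0}

/-- `S` is quasi-normal: the maximal based orthants of `S_τ` are exactly the support of `h_S`. -/
def QuasiNormal {N : ℕ} (S : Set (Fin N → ℤ)) : Prop :=
  ∀ L0 : Set (Fin N → ℤ),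
    (IsBasedOrthant L0 ∧ L0 ⊆ indicatorImage S ∧
      ∀ L1, IsBasedOrthant L1 → L1 ⊆ indicatorImage S → L0 ⊆ L1 → L1 ⊆ L0)
    ↔ (IsBasedOrthant L0 ∧ 0 < hFun S L0)

/-- The germ `q` of `S'` is the image of the germ `p` of `S` under the injective pei-map `f`. -/
def GermMapsTo {N : ℕ} (f : (Fin N → ℤ) → (Fin N → ℤ)) (S S' : Set (Fin N → ℤ))
    (p : Σ k, Germ S k) (q : Σ k, Germ S' k) : Prop :=
  p.1 = q.1 ∧ ∃ (L : germSet S p.1) (L'' : Set (Fin N → ℤ)) (M : germSet S' q.1),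
    germOf S p.1 L = p.2 ∧ IsOrthantOfRank L'' p.1 ∧ L'' ⊆ L.1 ∧ Commensurable L.1 L'' ∧
    M.1 = f '' L'' ∧ germOf S' q.1 M = q.2

/-- A stack of `h` parallel rank-`n` orthants. -/
def IsStack {N : ℕ} (S : Set (Fin N → ℤ)) (n h : ℕ) : Prop :=
  ∃ (L0 : Set (Fin N → ℤ)) (a : Fin h → (Fin N → ℤ)),
    IsOrthantOfRank L0 n ∧
    (Pairwise fun i j => Disjoint (a i +ᵥ L0) (a j +ᵥ L0)) ∧
    S = ⋃ i, a i +ᵥ L0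

/-- A coordinate half-space of `ℤ^N`. -/
def IsHalfSpace {N : ℕ} (H : Set (Fin N → ℤ)) : Prop :=
  ∃ (i : Fin N) (c : ℤ), H = {x | x i ≤ c} ∨ H = {x | c ≤ x i}

/-- The canonical embedding `ℤ^N → ℤ^{N+1}`. -/
def emb (N : ℕ) (x : Fin N → ℤ) : Fin (N + 1) → ℤ :=
  fun i => if h : (i : ℕ) < N then x ⟨i, h⟩ else 0

/-- The sum of all matrix entries of a finitely supported family of vectors. -/
noncomputable def totalSum (k : ℕ) (Γ : Type*) : (Γ →₀ (Fin k → ℤ)) →+ ℤ :=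
  Finsupp.liftAddHom (fun _ => ∑ i : Fin k, Pi.evalAddMonoidHom (fun _ => ℤ) i)

/-- The clique (flag) complex of a graph. -/
def cliqueComplex {V : Type*} (G : SimpleGraph V) : Set (Finset V) :=
  {s | s.Nonempty ∧ G.IsClique (s : Set V)}

/-- The geometric realization of a simplicial complex on vertex set `V`. -/
def realization {V : Type*} (K : Set (Finset V)) : Set (V → ℝ) :=
  {f | (∀ v, 0 ≤ f v) ∧ ∃ s ∈ K, Function.support f ⊆ ↑s ∧ ∑ v ∈ s, f v = 1}

/-- A wedge (bouquet) of `n`-spheres indexed by `ι`, with basepoint `b`. -/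
noncomputable def wedgeSpheres (ι : Type) (n : ℕ)
    (b : Metric.sphere (0 : EuclideanSpace ℝ (Fin (n + 1))) 1) : Type :=
  Quot (fun p q : Unit ⊕ (ι × Metric.sphere (0 : EuclideanSpace ℝ (Fin (n + 1))) 1) =>
    (Sum.elim (fun _ => True) (fun pr => pr.2 = b) p) ∧
    (Sum.elim (fun _ => True) (fun qr => qr.2 = b) q))

noncomputable instance (ι : Type) (n : ℕ) (b : Metric.sphere (0 : EuclideanSpace ℝ (Fin (n + 1))) 1) :
    TopologicalSpace (wedgeSpheres ι n b) :=
  letI : TopologicalSpace ι := ⊥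
  instTopologicalSpaceQuot


/-! ### Rays in ℤ and generic finite disjoint unions -/

inductive Ray : Type where
  | pt (c : ℤ) | ge (c : ℤ) | le (c : ℤ)

def Ray.set : Ray → Set ℤ
  | .pt c => {x | x = c}
  | .ge c => {x | c ≤ x}
  | .le c => {x | x ≤ c}

def boxSet {N : ℕ} (r : Fin N → Ray) : Set (Fin N → ℤ) := {v | ∀ i, v i ∈ (r i).set}

/-- Finite disjoint union of atoms. -/
def FinDU {α : Type} (atom : Set α → Prop) (T : Set α) : Prop :=
  ∃ (ι : Type) (_ : Finite ι) (b : ι → Set α),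
    (∀ j, atom (b j)) ∧ (∀ j k, j ≠ k → Disjoint (b j) (b k)) ∧ T = ⋃ j, b j

def rayAtom : Set ℤ → Prop := fun C => ∃ r : Ray, C = Ray.set r

def boxAtom {N : ℕ} : Set (Fin N → ℤ) → Prop := fun T => ∃ r : Fin N → Ray, T = boxSet r

lemma FinDU.atom {α : Type} {atom : Set α → Prop} {s : Set α} (h : atom s) : FinDU atom s :=
  ⟨PUnit, inferInstance, fun _ => s, fun _ => h, fun j k hjk => absurd rfl hjk, (Set.iUnion_const s).symm⟩

lemma FinDU.iUnion {α : Type} {atom : Set α → Prop} {ι : Type} [Finite ι]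
    {C : ι → Set α} (hd : ∀ j k, j ≠ k → Disjoint (C j) (C k))
    (h : ∀ j, FinDU atom (C j)) : FinDU atom (⋃ j, C j) := by
  choose κ κfin b hatom hdis heq using h
  have : ∀ j k, b j k ⊆ C j := fun j k => (heq j) ▸ Set.subset_iUnion _ _
  refine ⟨Σ j, κ j, by haveI := κfin; infer_instance, fun p => b p.1 p.2,
    fun p => hatom _ _, ?_, ?_⟩
  · rintro ⟨j, k⟩ ⟨j', k'⟩ hne
    rcases eq_or_ne j j' with rfl | hj
    · have hk : k ≠ k' := fun hk => hne (by rw [hk])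
      exact hdis j k k' hk
    · exact (hd j j' hj).mono (this j k) (this j' k')
  · rw [Set.iUnion_sigma]
    exact Set.iUnion_congr heq

lemma FinDU.inter {α : Type} {atom : Set α → Prop}
    (hatom : ∀ s t, atom s → atom t → FinDU atom (s ∩ t))
    {T T' : Set α} (h : FinDU atom T) (h' : FinDU atom T') : FinDU atom (T ∩ T') := by
  obtain ⟨ι, hι, b, hb, hd, rfl⟩ := h
  obtain ⟨ι', hι', c, hc, hd', rfl⟩ := h'
  haveI := hι; haveI := hι'
  have : (⋃ j, b j) ∩ (⋃ k, c k) = ⋃ p : ι × ι', b p.1 ∩ c p.2 := by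
    ext x
    simp only [Set.mem_inter_iff, Set.mem_iUnion, Prod.exists]
    tauto
  rw [this]
  refine FinDU.iUnion ?_ (fun p => hatom _ _ (hb p.1) (hc p.2))
  rintro ⟨j, k⟩ ⟨j', k'⟩ hne
  rcases eq_or_ne j j' with rfl | hj
  · have hk : k ≠ k' := fun hk => hne (by rw [hk])
    exact ((hd' k k' hk).mono Set.inter_subset_right Set.inter_subset_right)
  · exact ((hd j j' hj).mono Set.inter_subset_left Set.inter_subset_left)


lemma FinDU.iInter {α : Type} {atom : Set α → Prop}
    (huniv : FinDU atom Set.univ)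
    (hatom : ∀ s t, atom s → atom t → FinDU atom (s ∩ t)) :
    ∀ (n : ℕ) (C : Fin n → Set α), (∀ j, FinDU atom (C j)) → FinDU atom (⋂ j, C j) := by
  intro n
  induction n with
  | zero => intro C _; simpa using huniv
  | succ n ih =>
    intro C hC
    have : (⋂ j, C j) = C 0 ∩ ⋂ j : Fin n, C j.succ := by
      ext x
      simp only [Set.mem_iInter, Set.mem_inter_iff]
      constructor
      · exact fun h => ⟨h 0, fun j => h j.succ⟩
      · rintro ⟨h0, h⟩ j
        rcases Fin.eq_zero_or_eq_succ j with rfl | ⟨k, rfl⟩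
        · exact h0
        · exact h k
    rw [this]
    exact FinDU.inter hatom (hC 0) (ih _ (fun j => hC j.succ))

lemma FinDU.compl {α : Type} {atom : Set α → Prop}
    (huniv : FinDU atom Set.univ)
    (hatom : ∀ s t, atom s → atom t → FinDU atom (s ∩ t))
    (hcompl : ∀ s, atom s → FinDU atom sᶜ)
    {T : Set α} (h : FinDU atom T) : FinDU atom Tᶜ := by
  obtain ⟨ι, hι, b, hb, hd, rfl⟩ := h
  haveI := hι
  haveI := Fintype.ofFinite ι
  have e := (Fintype.equivFin ι).symm
  have : (⋃ j, b j)ᶜ = ⋂ k : Fin (Fintype.card ι), (b (e k))ᶜ := by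
    rw [Set.compl_iUnion]
    ext x
    simp only [Set.mem_iInter]
    exact ⟨fun h k => h (e k), fun h j => by simpa using h (e.symm j)⟩
  rw [this]
  exact FinDU.iInter huniv hatom _ _ (fun k => hcompl _ (hb _))

/-! ### Ray-level facts -/

def genSet (lo : WithBot ℤ) (hi : WithTop ℤ) : Set ℤ :=
  {x | lo ≤ (x : WithBot ℤ) ∧ (x : WithTop ℤ) ≤ hi}

def Ray.lo : Ray → WithBot ℤ
  | .pt c => (c : WithBot ℤ) | .ge c => (c : WithBot ℤ) | .le _ => ⊥

def Ray.hi : Ray → WithTop ℤ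
  | .pt c => (c : WithTop ℤ) | .ge _ => ⊤ | .le c => (c : WithTop ℤ)

lemma Ray.set_eq (r : Ray) : r.set = genSet r.lo r.hi := by
  cases r with
  | pt c =>
    ext x
    simp only [Ray.set, genSet, Ray.lo, Ray.hi, Set.mem_setOf_eq, WithBot.coe_le_coe,
      WithTop.coe_le_coe]
    omega
  | ge c =>
    ext x
    simp [Ray.set, genSet, Ray.lo, Ray.hi, WithBot.coe_le_coe]
  | le c =>
    ext x
    simp [Ray.set, genSet, Ray.lo, Ray.hi, WithTop.coe_le_coe]

lemma finDU_Icc (a b : ℤ) : FinDU rayAtom (Set.Icc a b) := by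
  refine ⟨Fin ((b + 1 - a).toNat), inferInstance, fun k => (Ray.pt (a + k)).set, 
    fun k => ⟨_, rfl⟩, ?_, ?_⟩
  · intro j k hjk
    simp only [Ray.set, Set.disjoint_left, Set.mem_setOf_eq]
    rintro x rfl h
    exact hjk (Fin.ext (by omega))
  · ext x
    simp only [Set.mem_Icc, Set.mem_iUnion, Ray.set, Set.mem_setOf_eq]
    constructor
    · intro ⟨h1, h2⟩
      refine ⟨⟨(x - a).toNat, by omega⟩, by simp; omega⟩
    · rintro ⟨⟨k, hk⟩, rfl⟩
      simp at hk ⊢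
      omega

lemma finDU_genSet (lo : WithBot ℤ) (hi : WithTop ℤ) : FinDU rayAtom (genSet lo hi) := by
  cases lo with
  | bot =>
    cases hi with
    | top =>
      have hu : genSet ⊥ (⊤ : WithTop ℤ) = (Ray.ge 0).set ∪ (Ray.le (-1)).set := by
        ext x
        simp [genSet, Ray.set]
        omega
      rw [hu]
      have hd : Disjoint (Ray.ge 0).set (Ray.le (-1)).set := by
        simp only [Ray.set, Set.disjoint_left, Set.mem_setOf_eq]
        omega
      have : (Ray.ge 0).set ∪ (Ray.le (-1)).set
          = ⋃ t : Bool, (if t then (Ray.ge 0).set else (Ray.le (-1)).set) := by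
        ext x; simp [Set.mem_iUnion, Bool.exists_bool]; tauto
      rw [this]
      refine ⟨Bool, inferInstance, _, ?_, ?_, rfl⟩
      · intro t
        cases t
        · exact ⟨Ray.le (-1), by simp⟩
        · exact ⟨Ray.ge 0, by simp⟩
      · intro j k hjk
        cases j <;> cases k <;> simp at hjk ⊢
        · exact hd.symm
        · exact hd
    | coe b =>
      have : genSet ⊥ (b : WithTop ℤ) = (Ray.le b).set := by
        ext x; simp [genSet, Ray.set, WithTop.coe_le_coe]
      rw [this]; exact FinDU.atom ⟨_, rfl⟩
  | coe a =>
    cases hi with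
    | top =>
      have : genSet (a : WithBot ℤ) ⊤ = (Ray.ge a).set := by
        ext x; simp [genSet, Ray.set, WithBot.coe_le_coe]
      rw [this]; exact FinDU.atom ⟨_, rfl⟩
    | coe b =>
      have : genSet (a : WithBot ℤ) (b : WithTop ℤ) = Set.Icc a b := by
        ext x; simp [genSet, Set.mem_Icc, WithBot.coe_le_coe, WithTop.coe_le_coe]
      rw [this]; exact finDU_Icc a b


lemma finDU_ray_univ : FinDU rayAtom (Set.univ : Set ℤ) := by
  have : (Set.univ : Set ℤ) = genSet ⊥ ⊤ := by
    ext x; simp [genSet]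
  rw [this]; exact finDU_genSet _ _

lemma finDU_ray_inter (s t : Set ℤ) (hs : rayAtom s) (ht : rayAtom t) :
    FinDU rayAtom (s ∩ t) := by
  obtain ⟨r, rfl⟩ := hs
  obtain ⟨r', rfl⟩ := ht
  have : r.set ∩ r'.set = genSet (r.lo ⊔ r'.lo) (r.hi ⊓ r'.hi) := by
    rw [Ray.set_eq r, Ray.set_eq r']
    ext x
    simp only [genSet, Set.mem_inter_iff, Set.mem_setOf_eq, sup_le_iff, le_inf_iff]
    tauto
  rw [this]; exact finDU_genSet _ _

lemma finDU_ray_compl (s : Set ℤ) (hs : rayAtom s) : FinDU rayAtom sᶜ := by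
  obtain ⟨r, rfl⟩ := hs
  cases r with
  | pt c =>
    have : (Ray.pt c).setᶜ = genSet ⊥ ((c - 1 : ℤ) : WithTop ℤ) ∪ genSet ((c + 1 : ℤ) : WithBot ℤ) ⊤ := by
      ext x
      simp only [Ray.set, Set.mem_compl_iff, Set.mem_setOf_eq, genSet, Set.mem_union,
        WithBot.coe_le_coe, WithTop.coe_le_coe, bot_le, le_top, and_true, true_and]
      omega
    rw [this]
    have hd : Disjoint (genSet ⊥ ((c - 1 : ℤ) : WithTop ℤ)) (genSet ((c + 1 : ℤ) : WithBot ℤ) ⊤) := by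
      simp only [Set.disjoint_left, genSet, Set.mem_setOf_eq, WithBot.coe_le_coe,
        WithTop.coe_le_coe]
      intro x hx hx'
      omega
    have hu : genSet ⊥ ((c - 1 : ℤ) : WithTop ℤ) ∪ genSet ((c + 1 : ℤ) : WithBot ℤ) ⊤
        = ⋃ t : Bool, (if t then genSet ⊥ ((c - 1 : ℤ) : WithTop ℤ) else genSet ((c + 1 : ℤ) : WithBot ℤ) ⊤) := by
      ext x; simp [Set.mem_iUnion, Bool.exists_bool]; tauto
    rw [hu]
    refine FinDU.iUnion ?_ ?_
    · intro j k hjk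
      cases j <;> cases k <;> simp at hjk ⊢
      · exact hd.symm
      · exact hd
    · intro t; cases t
      · simpa using finDU_genSet ((c + 1 : ℤ) : WithBot ℤ) ⊤
      · simpa using finDU_genSet ⊥ ((c - 1 : ℤ) : WithTop ℤ)
  | ge c =>
    have : (Ray.ge c).setᶜ = (Ray.le (c - 1)).set := by
      ext x; simp [Ray.set]
    rw [this]; exact FinDU.atom ⟨_, rfl⟩
  | le c =>
    have : (Ray.le c).setᶜ = (Ray.ge (c + 1)).set := by
      ext x; simp [Ray.set]
    rw [this]; exact FinDU.atom ⟨_, rfl⟩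

/-! ### Box-level facts -/

lemma FinDU.pi {N : ℕ} {C : Fin N → Set ℤ} (h : ∀ i, FinDU rayAtom (C i)) :
    FinDU boxAtom {v : Fin N → ℤ | ∀ i, v i ∈ C i} := by
  choose κ κfin ρ hatom hdis heq using h
  haveI := κfin
  choose rr hrr using hatom
  refine ⟨∀ i, κ i, inferInstance, fun k => boxSet (fun i => rr i (k i)),
    fun k => ⟨_, rfl⟩, ?_, ?_⟩
  · intro k k' hkk
    have : ∃ i, k i ≠ k' i := by
      by_contra hc
      push_neg at hc
      exact hkk (funext hc)
    obtain ⟨i, hi⟩ := this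
    have := hdis i _ _ hi
    rw [Set.disjoint_left] at this ⊢
    intro v hv hv'
    have h1 : v i ∈ ρ i (k i) := by rw [hrr]; exact hv i
    have h2 : v i ∈ ρ i (k' i) := by rw [hrr]; exact hv' i
    exact this h1 h2
  · ext v
    simp only [Set.mem_setOf_eq, Set.mem_iUnion]
    constructor
    · intro hv
      have : ∀ i, ∃ k, v i ∈ ρ i k := by
        intro i
        have := hv i
        rw [heq i] at this
        exact Set.mem_iUnion.mp this
      choose k hk using this
      exact ⟨k, fun i => by rw [← hrr]; exact hk i⟩
    · rintro ⟨k, hk⟩ i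
      rw [heq i]
      exact Set.mem_iUnion.mpr ⟨k i, by rw [hrr]; exact hk i⟩

lemma finDU_box_univ {N : ℕ} : FinDU boxAtom (Set.univ : Set (Fin N → ℤ)) := by
  have : (Set.univ : Set (Fin N → ℤ)) = {v | ∀ i, v i ∈ (Set.univ : Set ℤ)} := by
    ext v; simp
  rw [this]
  exact FinDU.pi (fun _ => finDU_ray_univ)

lemma finDU_box_inter_atom {N : ℕ} (s t : Set (Fin N → ℤ)) (hs : boxAtom s) (ht : boxAtom t) :
    FinDU boxAtom (s ∩ t) := by
  obtain ⟨r, rfl⟩ := hs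
  obtain ⟨r', rfl⟩ := ht
  have : boxSet r ∩ boxSet r' = {v : Fin N → ℤ | ∀ i, v i ∈ (r i).set ∩ (r' i).set} := by
    ext v
    simp only [boxSet, Set.mem_inter_iff, Set.mem_setOf_eq]
    exact ⟨fun h i => ⟨h.1 i, h.2 i⟩, fun h => ⟨fun i => (h i).1, fun i => (h i).2⟩⟩
  rw [this]
  exact FinDU.pi (fun i => finDU_ray_inter _ _ ⟨_, rfl⟩ ⟨_, rfl⟩)

lemma finDU_box_compl_atom {N : ℕ} (s : Set (Fin N → ℤ)) (hs : boxAtom s) :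
    FinDU boxAtom sᶜ := by
  obtain ⟨r, rfl⟩ := hs
  classical
  set D : Fin N → Set (Fin N → ℤ) := fun i =>
    {v | (∀ j, j < i → v j ∈ (r j).set) ∧ v i ∉ (r i).set} with hD
  have hDeq : ∀ i, D i = {v : Fin N → ℤ |
      ∀ j, v j ∈ (if j < i then (r j).set else if j = i then ((r i).set)ᶜ else Set.univ)} := by
    intro i
    ext v
    simp only [hD, Set.mem_setOf_eq]
    constructor
    · rintro ⟨h1, h2⟩ j
      split_ifs with ha hb
      · exact h1 j ha
      · cases hb; exact h2
      · trivial
    · intro h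
      refine ⟨fun j hj => ?_, ?_⟩
      · have := h j; rwa [if_pos hj] at this
      · have := h i; rwa [if_neg (lt_irrefl i), if_pos rfl] at this
  have hcov : (boxSet r)ᶜ = ⋃ i, D i := by
    ext v
    simp only [Set.mem_compl_iff, boxSet, Set.mem_setOf_eq, Set.mem_iUnion, hD]
    constructor
    · intro hv
      push_neg at hv
      have hne : {i | v i ∉ (r i).set}.Nonempty := hv
      have hfin : {i | v i ∉ (r i).set}.Finite := Set.finite_univ.subset (Set.subset_univ _)
      obtain ⟨i0, hi0, hmin⟩ := Set.exists_min_image _ id hfin hne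
      refine ⟨i0, fun j hj => ?_, hi0⟩
      by_contra hc
      exact absurd (hmin j hc) (by simpa using hj)
    · rintro ⟨i, _, hi2⟩ hv
      exact hi2 (hv i)
  rw [hcov]
  refine FinDU.iUnion ?_ ?_
  · intro i i' hii
    rw [Set.disjoint_left]
    intro v hv hv'
    rcases Ne.lt_or_gt hii with h | h
    · exact hv.2 (hv'.1 i h)
    · exact hv'.2 (hv.1 i' h)
  · intro i
    rw [hDeq i]
    refine FinDU.pi (fun j => ?_)
    by_cases h1 : j < i
    · rw [if_pos h1]; exact FinDU.atom ⟨_, rfl⟩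
    · by_cases h2 : j = i
      · rw [if_neg h1, if_pos h2]
        exact finDU_ray_compl _ ⟨_, rfl⟩
      · rw [if_neg h1, if_neg h2]
        exact finDU_ray_univ

lemma FinDU.box_inter {N : ℕ} {T T' : Set (Fin N → ℤ)} (h : FinDU boxAtom T)
    (h' : FinDU boxAtom T') : FinDU boxAtom (T ∩ T') :=
  FinDU.inter finDU_box_inter_atom h h'

lemma FinDU.box_compl {N : ℕ} {T : Set (Fin N → ℤ)} (h : FinDU boxAtom T) :
    FinDU boxAtom Tᶜ :=
  FinDU.compl finDU_box_univ finDU_box_inter_atom finDU_box_compl_atom h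

lemma FinDU.box_diff_iUnion {N : ℕ} {T : Set (Fin N → ℤ)} (h : FinDU boxAtom T)
    {ι : Type} [Finite ι] {F : ι → Set (Fin N → ℤ)} (hF : ∀ j, FinDU boxAtom (F j)) :
    FinDU boxAtom (T \ ⋃ j, F j) := by
  haveI := Fintype.ofFinite ι
  have e := (Fintype.equivFin ι).symm
  have : T \ ⋃ j, F j = T ∩ ⋂ k : Fin (Fintype.card ι), (F (e k))ᶜ := by
    rw [Set.diff_eq, Set.compl_iUnion]
    congr 1
    ext x
    simp only [Set.mem_iInter]
    exact ⟨fun h k => h (e k), fun h j => by simpa using h (e.symm j)⟩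
  rw [this]
  exact h.box_inter (FinDU.iInter finDU_box_univ finDU_box_inter_atom _ _
    (fun k => (hF (e k)).box_compl))


/-! ### Orthants and boxes -/

lemma IsOrthMat.transpose_mul {N : ℕ} {A : Matrix (Fin N) (Fin N) ℤ} (hA : IsOrthMat A) :
    A.transpose * A = 1 :=
  mul_eq_one_comm.mp hA

lemma IsOrthMat.mul {N : ℕ} {A B : Matrix (Fin N) (Fin N) ℤ} (hA : IsOrthMat A)
    (hB : IsOrthMat B) : IsOrthMat (A * B) := by
  unfold IsOrthMat at *
  rw [Matrix.transpose_mul, ← Matrix.mul_assoc, Matrix.mul_assoc A B, hB, Matrix.mul_one, hA]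

lemma IsOrthMat.transpose {N : ℕ} {A : Matrix (Fin N) (Fin N) ℤ} (hA : IsOrthMat A) :
    IsOrthMat A.transpose := by
  unfold IsOrthMat
  rw [Matrix.transpose_transpose]
  exact hA.transpose_mul

lemma IsOrthMat.mulVec_transpose_mulVec {N : ℕ} {A : Matrix (Fin N) (Fin N) ℤ}
    (hA : IsOrthMat A) (v : Fin N → ℤ) : A.transpose.mulVec (A.mulVec v) = v := by
  rw [Matrix.mulVec_mulVec, hA.transpose_mul, Matrix.one_mulVec]

lemma IsOrthMat.mulVec_mulVec_transpose {N : ℕ} {A : Matrix (Fin N) (Fin N) ℤ}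
    (hA : IsOrthMat A) (v : Fin N → ℤ) : A.mulVec (A.transpose.mulVec v) = v := by
  rw [Matrix.mulVec_mulVec, hA, Matrix.one_mulVec]

lemma IsOrthMat.mulVec_injective {N : ℕ} {A : Matrix (Fin N) (Fin N) ℤ} (hA : IsOrthMat A) :
    Function.Injective A.mulVec := fun v w h => by
  have := congrArg A.transpose.mulVec h
  rwa [hA.mulVec_transpose_mulVec, hA.mulVec_transpose_mulVec] at this

/-- image of an orthant under an affine orthogonal map is an orthant. -/
lemma IsOrthant.image_affine {N : ℕ} {L : Set (Fin N → ℤ)} (hL : IsOrthant L)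
    (a : Fin N → ℤ) {A : Matrix (Fin N) (Fin N) ℤ} (hA : IsOrthMat A) :
    IsOrthant ((fun x => a + A.mulVec x) '' L) := by
  obtain ⟨k, b, B, Y, hB, hY, rfl⟩ := hL
  refine ⟨k, a + A.mulVec b, A * B, Y, hA.mul hB, hY, ?_⟩
  rw [← Set.image_comp]
  apply Set.image_congr
  intro v _
  simp only [Function.comp_apply]
  rw [Matrix.mulVec_add, ← Matrix.mulVec_mulVec, add_assoc]

lemma sum_mul_self_eq_one {N : ℕ} (g : Fin N → ℤ) (h : ∑ j, g j * g j = 1) :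
    ∃ j₀, (g j₀ = 1 ∨ g j₀ = -1) ∧ ∀ j, j ≠ j₀ → g j = 0 := by
  have hex : ∃ j₀, g j₀ ≠ 0 := by
    by_contra hc
    push_neg at hc
    simp [hc] at h
  obtain ⟨j₀, hj₀⟩ := hex
  have hsplit : g j₀ * g j₀ + ∑ j ∈ Finset.univ.erase j₀, g j * g j = 1 := by
    have := Finset.add_sum_erase Finset.univ (fun j => g j * g j) (Finset.mem_univ j₀)
    rw [this]
    exact h
  have hnn : ∀ j ∈ Finset.univ.erase j₀, 0 ≤ g j * g j := fun j _ => mul_self_nonneg _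
  have hge : 1 ≤ g j₀ * g j₀ := by
    rcases lt_or_gt_of_ne hj₀ with hlt | hgt
    · nlinarith
    · nlinarith
  have hrest : ∑ j ∈ Finset.univ.erase j₀, g j * g j = 0 := by
    have := Finset.sum_nonneg hnn
    omega
  have hzero : ∀ j ∈ Finset.univ.erase j₀, g j * g j = 0 :=
    (Finset.sum_eq_zero_iff_of_nonneg hnn).mp hrest
  refine ⟨j₀, ?_, fun j hj => ?_⟩
  · have : g j₀ * g j₀ = 1 := by omega
    exact mul_self_eq_one_iff.mp this
  · have := hzero j (Finset.mem_erase.mpr ⟨hj, Finset.mem_univ j⟩)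
    exact mul_self_eq_zero.mp this

/-- integral orthogonal matrices are signed permutation matrices. -/
lemma IsOrthMat.signed_perm {N : ℕ} {A : Matrix (Fin N) (Fin N) ℤ} (hA : IsOrthMat A) :
    ∃ σ : Equiv.Perm (Fin N), ∀ i, (A i (σ i) = 1 ∨ A i (σ i) = -1) ∧
      ∀ j, j ≠ σ i → A i j = 0 := by
  have hrow : ∀ i, ∑ j, A i j * A i j = 1 := by
    intro i
    have := congrFun (congrFun hA i) i
    simpa [Matrix.mul_apply, Matrix.transpose_apply, Matrix.one_apply] using this
  have h := fun i => sum_mul_self_eq_one (A i) (hrow i)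
  choose τ hτ1 hτ2 using h
  have hinj : Function.Injective τ := by
    intro i i' hii
    by_contra hne
    have horth : ∑ j, A i j * A i' j = 0 := by
      have := congrFun (congrFun hA i) i'
      simpa [Matrix.mul_apply, Matrix.transpose_apply, Matrix.one_apply, hne] using this
    have : ∑ j, A i j * A i' j = A i (τ i) * A i' (τ i) := by
      refine Finset.sum_eq_single (τ i) ?_ (by simp)
      intro j _ hj
      rw [hτ2 i j hj, zero_mul]
    rw [this, hii] at horth
    rcases hτ1 i with h1 | h1 <;> rcases hτ1 i' with h2 | h2 <;>
      rw [hii] at h1 <;> rw [h1, h2] at horth <;> norm_num at horth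
  exact ⟨Equiv.ofBijective τ (Finite.injective_iff_bijective.mp hinj), fun i =>
    ⟨hτ1 i, hτ2 i⟩⟩

/-- every box is an orthant. -/
lemma isOrthant_boxSet {N : ℕ} (r : Fin N → Ray) : IsOrthant (boxSet r) := by
  classical
  set c : Fin N → ℤ := fun i => match r i with
    | .pt x => x | .ge x => x | .le x => x with hc
  set ε : Fin N → ℤ := fun i => match r i with
    | .pt _ => 1 | .ge _ => 1 | .le _ => -1 with hε
  have hε2 : ∀ i, ε i * ε i = 1 := by
    intro i; simp only [hε]; cases r i <;> norm_num
  set Y : Finset (Fin N) := Finset.univ.filter (fun i => match r i with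
    | .pt _ => False | .ge _ => True | .le _ => True) with hY
  refine ⟨Y.card, c, Matrix.diagonal ε, Y, ?_, rfl, ?_⟩
  · unfold IsOrthMat
    rw [Matrix.diagonal_transpose, Matrix.diagonal_mul_diagonal]
    have : (fun i => ε i * ε i) = fun _ => (1 : ℤ) := funext hε2
    rw [this, Matrix.diagonal_one]
  · ext w
    simp only [Set.mem_image]
    constructor
    · intro hw
      refine ⟨fun i => ε i * (w i - c i), ⟨?_, ?_⟩, ?_⟩
      · intro i
        have := hw i
        simp only [hε, hc]
        cases h : r i <;> rw [h] at this <;> simp only [Ray.set, Set.mem_setOf_eq] at this <;>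
          simp <;> omega
      · intro i hi
        have hpt : ∃ x, r i = .pt x := by
          simp only [hY, Finset.mem_filter, Finset.mem_univ, true_and] at hi
          cases h : r i
          · exact ⟨_, rfl⟩
          · rw [h] at hi; simp at hi
          · rw [h] at hi; simp at hi
        obtain ⟨x, hx⟩ := hpt
        have := hw i
        rw [hx] at this
        simp only [Ray.set, Set.mem_setOf_eq] at this
        simp only [hc, hε, hx, this]
        ring
      · funext i
        simp only [Matrix.mulVec_diagonal, Pi.add_apply]
        rw [← mul_assoc, hε2 i]
        ring
    · rintro ⟨v, ⟨hv1, hv2⟩, rfl⟩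
      intro i
      simp only [Pi.add_apply, Matrix.mulVec_diagonal]
      cases h : r i <;> simp only [Ray.set, Set.mem_setOf_eq]
      · have : i ∉ Y := by simp [hY, h]
        rw [hv2 i this]
        simp [hc, h]
      · have : ε i = 1 := by simp [hε, h]
        rw [this]
        have : c i ≤ c i + 1 * v i := by have := hv1 i; omega
        simpa [hc, h] using this
      · have : ε i = -1 := by simp [hε, h]
        rw [this]
        have : c i + (-1) * v i ≤ c i := by have := hv1 i; omega
        simpa [hc, h] using this

/-- every orthant is a box. -/
lemma IsOrthant.exists_box {N : ℕ} {L : Set (Fin N → ℤ)} (hL : IsOrthant L) :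
    ∃ r : Fin N → Ray, L = boxSet r := by
  classical
  obtain ⟨k, a, A, Y, hA, hY, rfl⟩ := hL
  obtain ⟨σ, hσ⟩ := hA.signed_perm
  set r : Fin N → Ray := fun i =>
    if σ i ∈ Y then (if A i (σ i) = 1 then Ray.ge (a i) else Ray.le (a i)) else Ray.pt (a i)
    with hr
  refine ⟨r, ?_⟩
  have hmv : ∀ (v : Fin N → ℤ) i, A.mulVec v i = A i (σ i) * v (σ i) := by
    intro v i
    simp only [Matrix.mulVec, dotProduct]
    refine Finset.sum_eq_single (σ i) ?_ (by simp)
    intro j _ hj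
    show A i j * v j = 0
    rw [(hσ i).2 j hj, zero_mul]
  ext w
  simp only [Set.mem_image, boxSet, Set.mem_setOf_eq]
  constructor
  · rintro ⟨v, ⟨hv1, hv2⟩, rfl⟩
    intro i
    simp only [Pi.add_apply, hmv]
    simp only [hr]
    by_cases h1 : σ i ∈ Y
    · rw [if_pos h1]
      rcases (hσ i).1 with h2 | h2
      · rw [if_pos h2, h2]
        simp only [Ray.set, Set.mem_setOf_eq]
        have := hv1 (σ i); omega
      · rw [h2, if_neg (by omega)]
        simp only [Ray.set, Set.mem_setOf_eq]
        have := hv1 (σ i); omega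
    · rw [if_neg h1]
      simp only [Ray.set, Set.mem_setOf_eq]
      rw [hv2 (σ i) h1]
      ring
  · intro hw
    refine ⟨fun j => A (σ.symm j) j * (w (σ.symm j) - a (σ.symm j)), ⟨?_, ?_⟩, ?_⟩
    · intro j
      show 0 ≤ A (σ.symm j) j * (w (σ.symm j) - a (σ.symm j))
      have hji : σ (σ.symm j) = j := Equiv.apply_symm_apply σ j
      have hwj := hw (σ.symm j)
      simp only [hr] at hwj
      rw [hji] at hwj
      by_cases h1 : j ∈ Y
      · rw [if_pos h1] at hwj
        by_cases h2 : A (σ.symm j) j = 1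
        · rw [if_pos h2] at hwj
          simp only [Ray.set, Set.mem_setOf_eq] at hwj
          rw [h2]; omega
        · have h3 : A (σ.symm j) j = -1 := by
            have := (hσ (σ.symm j)).1
            rw [hji] at this
            rcases this with h | h
            · exact absurd h h2
            · exact h
          rw [if_neg h2] at hwj
          simp only [Ray.set, Set.mem_setOf_eq] at hwj
          rw [h3]; omega
      · rw [if_neg h1] at hwj
        simp only [Ray.set, Set.mem_setOf_eq] at hwj
        rw [hwj]; simp
    · intro j hj
      show A (σ.symm j) j * (w (σ.symm j) - a (σ.symm j)) = 0
      have hji : σ (σ.symm j) = j := Equiv.apply_symm_apply σ j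
      have hwj := hw (σ.symm j)
      simp only [hr] at hwj
      rw [hji, if_neg hj] at hwj
      simp only [Ray.set, Set.mem_setOf_eq] at hwj
      rw [hwj]; ring
    · funext i
      show a i + A.mulVec _ i = w i
      rw [hmv]
      have hsi : σ.symm (σ i) = i := Equiv.symm_apply_apply σ i
      simp only [hsi]
      rcases (hσ i).1 with h2 | h2 <;> rw [h2] <;> ring


/-! ### Assembly helpers -/

lemma finDU_boxAtom_of_orthant {N : ℕ} {L : Set (Fin N → ℤ)} (hL : IsOrthant L) :
    FinDU boxAtom L := by
  obtain ⟨r, rfl⟩ := hL.exists_box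
  exact FinDU.atom ⟨r, rfl⟩

lemma IsometricOn.mono {N : ℕ} {f : (Fin N → ℤ) → (Fin N → ℤ)} {L L' : Set (Fin N → ℤ)}
    (h : IsometricOn f L) (hsub : L' ⊆ L) : IsometricOn f L' := by
  obtain ⟨a, A, hA, he⟩ := h
  exact ⟨a, A, hA, fun x hx => he x (hsub hx)⟩

lemma IsometricOn.congr {N : ℕ} {f g : (Fin N → ℤ) → (Fin N → ℤ)} {L : Set (Fin N → ℤ)}
    (h : IsometricOn f L) (hfg : ∀ x ∈ L, g x = f x) : IsometricOn g L := by
  obtain ⟨a, A, hA, he⟩ := h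
  exact ⟨a, A, hA, fun x hx => (hfg x hx).trans (he x hx)⟩

lemma isPeiMapOn_of_indexed {N : ℕ} {S : Set (Fin N → ℤ)} {f : (Fin N → ℤ) → (Fin N → ℤ)}
    {ι : Type} [Finite ι] (P : ι → Set (Fin N → ℤ)) (horth : ∀ i, IsOrthant (P i))
    (hdis : ∀ i j, i ≠ j → Disjoint (P i) (P j)) (hcov : S = ⋃ i, P i)
    (hiso : ∀ i, IsometricOn f (P i)) : IsPeiMapOn S f := by
  refine ⟨Set.range P, Set.finite_range P, ?_, by rw [hcov, Set.sUnion_range], ?_, ?_⟩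
  · rintro L ⟨i, rfl⟩; exact horth i
  · rintro s ⟨i, rfl⟩ t ⟨j, rfl⟩ hst
    exact hdis i j (fun h => hst (congrArg P h))
  · rintro L ⟨i, rfl⟩; exact hiso i

lemma image_eq_affine_image {N : ℕ} {f : (Fin N → ℤ) → (Fin N → ℤ)} {M : Set (Fin N → ℤ)}
    {a : Fin N → ℤ} {A : Matrix (Fin N) (Fin N) ℤ} (he : ∀ x ∈ M, f x = a + A.mulVec x) :
    f '' M = (fun x => a + A.mulVec x) '' M :=
  Set.image_congr he

lemma isOrthant_image_isometry {N : ℕ} {f : (Fin N → ℤ) → (Fin N → ℤ)} {M : Set (Fin N → ℤ)}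
    (hM : IsOrthant M) (h : IsometricOn f M) : IsOrthant (f '' M) := by
  obtain ⟨a, A, hA, he⟩ := h
  rw [image_eq_affine_image he]
  exact hM.image_affine a hA

lemma perm_image_self {N : ℕ} {S : Set (Fin N → ℤ)} (g : Equiv.Perm (Fin N → ℤ))
    (hgid : ∀ x ∉ S, g x = x) : g '' S = S := by
  apply Set.Subset.antisymm
  · rintro y ⟨x, hx, rfl⟩
    by_contra hy
    have : g (g x) = g x := hgid _ hy
    have := g.injective this
    rw [this] at hy
    exact hy hx
  · intro y hy
    refine ⟨g.symm y, ?_, g.apply_symm_apply y⟩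
    by_contra hx
    have : g (g.symm y) = g.symm y := hgid _ hx
    rw [g.apply_symm_apply] at this
    rw [← this] at hx
    exact hx hy

lemma stmt19_forward {N : ℕ} {S : Set (Fin N → ℤ)} {f f' : (Fin N → ℤ) → (Fin N → ℤ)}
    (hf : IsPeiMapOn S f) (hfi : Set.InjOn f S) (hfS : f '' S ⊆ S)
    (g : Equiv.Perm (Fin N → ℤ)) (hg : IsPeiPerm S g) (hfg : ∀ x ∈ S, f' x = g (f x)) :
    PeiIsomorphic (S \ (f '' S)) (S \ (f' '' S)) := by
  obtain ⟨⟨G, hGfin, hGorth, hGcov, hGdis, hGiso⟩, hgid⟩ := hg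
  obtain ⟨F, hFfin, hForth, hFcov, hFdis, hFiso⟩ := hf
  haveI := hGfin.to_subtype
  haveI := hFfin.to_subtype
  have hTeq : f '' S = ⋃ M : ↥F, f '' (M : Set (Fin N → ℤ)) := by
    conv_lhs => rw [hFcov, Set.sUnion_eq_iUnion, Set.image_iUnion]
  have hD : ∀ L : ↥G, FinDU boxAtom ((L : Set (Fin N → ℤ)) \ (f '' S)) := by
    intro L
    rw [hTeq]
    exact FinDU.box_diff_iUnion (finDU_boxAtom_of_orthant (hGorth L L.2))
      (fun M => finDU_boxAtom_of_orthant
        (isOrthant_image_isometry (hForth M M.2) (hFiso M M.2)))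
  choose κ κfin b hatom hdisj heq using hD
  haveI := κfin
  have hbsub : ∀ (L : ↥G) (k : κ L), b L k ⊆ (L : Set (Fin N → ℤ)) \ (f '' S) := by
    intro L k
    rw [heq L]
    exact Set.subset_iUnion _ _
  refine ⟨⇑g, ?_, g.injective.injOn, ?_⟩
  · refine isPeiMapOn_of_indexed (ι := Σ L : ↥G, κ L) (fun p => b p.1 p.2) ?_ ?_ ?_ ?_
    · intro p
      obtain ⟨r, hr⟩ := hatom p.1 p.2
      show IsOrthant (b p.1 p.2)
      rw [hr]
      exact isOrthant_boxSet r
    · rintro ⟨L, k⟩ ⟨L', k'⟩ hne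
      rcases eq_or_ne L L' with rfl | hL
      · have hk : k ≠ k' := fun hk => hne (by rw [hk])
        exact hdisj L k k' hk
      · have hLL : (L : Set (Fin N → ℤ)) ≠ (L' : Set (Fin N → ℤ)) :=
          fun h => hL (Subtype.ext h)
        exact (hGdis L.2 L'.2 hLL).mono
          ((hbsub L k).trans Set.diff_subset) ((hbsub L' k').trans Set.diff_subset)
    · have hsplit : ∀ T : Set (Fin N → ℤ), S \ T = ⋃ L : ↥G, ((L : Set (Fin N → ℤ)) \ T) := by
        intro T
        conv_lhs => rw [hGcov, Set.sUnion_eq_iUnion]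
        rw [Set.iUnion_diff]
      rw [hsplit (f '' S), Set.iUnion_sigma]
      exact Set.iUnion_congr heq
    · intro p
      exact (hGiso p.1 p.1.2).mono ((hbsub p.1 p.2).trans Set.diff_subset)
  · have hgS : g '' S = S := perm_image_self g hgid
    have himg : g '' (f '' S) = f' '' S := by
      rw [← Set.image_comp]
      exact Set.image_congr (fun x hx => (hfg x hx).symm)
    rw [Set.image_diff g.injective, hgS, himg]

lemma stmt19_backward {N : ℕ} {S : Set (Fin N → ℤ)} {f f' : (Fin N → ℤ) → (Fin N → ℤ)}
    (hf : IsPeiMapOn S f) (hfi : Set.InjOn f S) (hfS : f '' S ⊆ S)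
    (hf' : IsPeiMapOn S f') (hfi' : Set.InjOn f' S) (hfS' : f' '' S ⊆ S)
    (h : PeiIsomorphic (S \ (f '' S)) (S \ (f' '' S))) :
    ∃ g : Equiv.Perm (Fin N → ℤ), IsPeiPerm S g ∧ ∀ x ∈ S, f' x = g (f x) := by
  classical
  obtain ⟨h0, hpei, hinj0, himg0⟩ := h
  obtain ⟨F, hFfin, hForth, hFcov, hFdis, hFiso⟩ := hf
  obtain ⟨F', hF'fin, hF'orth, hF'cov, hF'dis, hF'iso⟩ := hf'
  obtain ⟨H, hHfin, hHorth, hHcov, hHdis, hHiso⟩ := hpei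
  haveI := hFfin.to_subtype
  haveI := hF'fin.to_subtype
  haveI := hHfin.to_subtype
  set u : (Fin N → ℤ) → (Fin N → ℤ) := Function.invFunOn f S with hu
  have hu1 : ∀ x ∈ f '' S, u x ∈ S := by
    rintro x ⟨w, hw, rfl⟩
    exact Function.invFunOn_mem ⟨w, hw, rfl⟩
  have hu2 : ∀ x ∈ f '' S, f (u x) = x := by
    rintro x ⟨w, hw, rfl⟩
    exact Function.invFunOn_eq ⟨w, hw, rfl⟩
  have hu3 : ∀ w ∈ S, u (f w) = w := fun w hw =>
    hfi (hu1 _ ⟨w, hw, rfl⟩) hw (hu2 _ ⟨w, hw, rfl⟩)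
  set g0 : (Fin N → ℤ) → (Fin N → ℤ) :=
    fun x => if x ∈ f '' S then f' (u x) else if x ∈ S then h0 x else x with hg0
  have hval1 : ∀ x ∈ f '' S, g0 x = f' (u x) := fun x hx => by
    simp only [hg0, if_pos hx]
  have hval2 : ∀ x, x ∈ S → x ∉ f '' S → g0 x = h0 x := fun x hx hx' => by
    simp only [hg0, if_neg hx', if_pos hx]
  have hval3 : ∀ x ∉ S, g0 x = x := fun x hx => by
    simp only [hg0, if_neg (fun hc => hx (hfS hc)), if_neg hx]
  have hmem1 : ∀ x ∈ f '' S, g0 x ∈ f' '' S := fun x hx => by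
    rw [hval1 x hx]; exact ⟨u x, hu1 x hx, rfl⟩
  have hmem2 : ∀ x, x ∈ S → x ∉ f '' S → g0 x ∈ S \ (f' '' S) := fun x hx hx' => by
    rw [hval2 x hx hx', ← himg0]
    exact ⟨x, ⟨hx, hx'⟩, rfl⟩
  have hbij : Function.Bijective g0 := by
    constructor
    · intro x y hxy
      by_cases hx1 : x ∈ f '' S <;> by_cases hy1 : y ∈ f '' S
      · rw [hval1 x hx1, hval1 y hy1] at hxy
        have huxy := hfi' (hu1 x hx1) (hu1 y hy1) hxy
        calc x = f (u x) := (hu2 x hx1).symm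
          _ = f (u y) := by rw [huxy]
          _ = y := hu2 y hy1
      · by_cases hy2 : y ∈ S
        · exact absurd (hxy ▸ hmem1 x hx1) (hmem2 y hy2 hy1).2
        · rw [hval3 y hy2] at hxy
          exact absurd (hxy ▸ hfS' (hmem1 x hx1)) hy2
      · by_cases hx2 : x ∈ S
        · exact absurd (hxy.symm ▸ hmem1 y hy1) (hmem2 x hx2 hx1).2
        · rw [hval3 x hx2] at hxy
          exact absurd (hxy ▸ hfS' (hmem1 y hy1)) hx2
      · by_cases hx2 : x ∈ S <;> by_cases hy2 : y ∈ S
        · rw [hval2 x hx2 hx1, hval2 y hy2 hy1] at hxy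
          exact hinj0 ⟨hx2, hx1⟩ ⟨hy2, hy1⟩ hxy
        · rw [hval3 y hy2] at hxy
          exact absurd (hxy ▸ (hmem2 x hx2 hx1).1) hy2
        · rw [hval3 x hx2] at hxy
          exact absurd (hxy.symm ▸ (hmem2 y hy2 hy1).1) hx2
        · rw [hval3 x hx2, hval3 y hy2] at hxy
          exact hxy
    · intro y
      by_cases hy1 : y ∈ f' '' S
      · obtain ⟨w, hw, rfl⟩ := hy1
        refine ⟨f w, ?_⟩
        rw [hval1 _ ⟨w, hw, rfl⟩, hu3 w hw]
      · by_cases hy2 : y ∈ S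
        · have : y ∈ S \ (f' '' S) := ⟨hy2, hy1⟩
          rw [← himg0] at this
          obtain ⟨x, hx, rfl⟩ := this
          exact ⟨x, hval2 x hx.1 hx.2⟩
        · exact ⟨y, hval3 y hy2⟩
  -- the decomposition of S on which g0 is pei
  have hFiso2 := fun M : ↥F => hFiso ↑M M.2
  choose aF AF hAF heF using hFiso2
  have hF'iso2 := fun M : ↥F' => hF'iso ↑M M.2
  choose aF' AF' hAF' heF' using hF'iso2
  have hMsubS : ∀ M : ↥F, (M : Set (Fin N → ℤ)) ⊆ S := fun M => by
    rw [hFcov]; exact Set.subset_sUnion_of_mem M.2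
  have hM'subS : ∀ M' : ↥F', (M' : Set (Fin N → ℤ)) ⊆ S := fun M' => by
    rw [hF'cov]; exact Set.subset_sUnion_of_mem M'.2
  have hHsub : ∀ Q : ↥H, (Q : Set (Fin N → ℤ)) ⊆ S \ (f '' S) := fun Q => by
    rw [hHcov]; exact Set.subset_sUnion_of_mem Q.2
  have hint : ∀ p : ↥F × ↥F', FinDU boxAtom ((p.1 : Set (Fin N → ℤ)) ∩ (p.2 : Set (Fin N → ℤ))) :=
    fun p => (finDU_boxAtom_of_orthant (hForth p.1 p.1.2)).box_inter
      (finDU_boxAtom_of_orthant (hF'orth p.2 p.2.2))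
  choose κ κfin b hatom hdisj heq using hint
  haveI := κfin
  have hbsub : ∀ (p : ↥F × ↥F') (k : κ p),
      b p k ⊆ (p.1 : Set (Fin N → ℤ)) ∩ (p.2 : Set (Fin N → ℤ)) := by
    intro p k
    rw [heq p]
    exact Set.subset_iUnion _ _
  set α : ↥F → (Fin N → ℤ) → (Fin N → ℤ) := fun M x => aF M + (AF M).mulVec x with hα
  have hαinj : ∀ M, Function.Injective (α M) := by
    intro M x y hxy
    simp only [hα] at hxy
    exact (hAF M).mulVec_injective (add_left_cancel hxy)
  have hαf : ∀ (M : ↥F) (X : Set (Fin N → ℤ)), X ⊆ (M : Set (Fin N → ℤ)) →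
      α M '' X = f '' X := fun M X hX =>
    Set.image_congr (fun x hx => (heF M x (hX hx)).symm)
  have hfMdis : ∀ M M2 : ↥F, M ≠ M2 →
      Disjoint (f '' (M : Set (Fin N → ℤ))) (f '' (M2 : Set (Fin N → ℤ))) := by
    intro M M2 hMM
    rw [Set.disjoint_left]
    rintro y ⟨w1, hw1, rfl⟩ ⟨w2, hw2, hw⟩
    have hww : w2 = w1 := hfi (hMsubS M2 hw2) (hMsubS M hw1) hw
    have hd : Disjoint (M : Set (Fin N → ℤ)) (M2 : Set (Fin N → ℤ)) :=
      hFdis M.2 M2.2 (fun hc => hMM (Subtype.ext hc))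
    rw [Set.disjoint_left] at hd
    exact hd hw1 (hww ▸ hw2)
  have hPsubT : ∀ (p : ↥F × ↥F') (k : κ p), α p.1 '' b p k ⊆ f '' S := by
    intro p k
    rw [hαf p.1 _ ((hbsub p k).trans Set.inter_subset_left)]
    exact Set.image_mono ((hbsub p k).trans (Set.inter_subset_left.trans (hMsubS p.1)))
  set P : (Σ p : ↥F × ↥F', κ p) ⊕ ↥H → Set (Fin N → ℤ) :=
    Sum.elim (fun q => α q.1.1 '' b q.1 q.2) (fun Q => (Q : Set (Fin N → ℤ))) with hP
  have hPei : IsPeiMapOn S g0 := by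
    refine isPeiMapOn_of_indexed P ?_ ?_ ?_ ?_
    · rintro (⟨p, k⟩ | Q)
      · show IsOrthant (α p.1 '' b p k)
        obtain ⟨r, hr⟩ := hatom p k
        rw [hr]
        exact (isOrthant_boxSet r).image_affine (aF p.1) (hAF p.1)
      · exact hHorth Q Q.2
    · rintro (⟨p, k⟩ | Q) (⟨p', k'⟩ | Q') hne
      · show Disjoint (α p.1 '' b p k) (α p'.1 '' b p' k')
        rcases eq_or_ne p p' with rfl | hp
        · have hk : k ≠ k' := fun hk => hne (by rw [hk])
          exact Set.disjoint_image_of_injective (hαinj p.1) (hdisj p k k' hk)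
        · rcases eq_or_ne p.1 p'.1 with hM | hM
          · obtain ⟨M, M'⟩ := p
            obtain ⟨M2, M'2⟩ := p'
            simp only at hM
            subst hM
            have hM' : M' ≠ M'2 := by
              intro hc
              exact hp (by rw [hc])
            have hd : Disjoint (M' : Set (Fin N → ℤ)) (M'2 : Set (Fin N → ℤ)) :=
              hF'dis M'.2 M'2.2 (fun hc => hM' (Subtype.ext hc))
            refine Set.disjoint_image_of_injective (hαinj M) ?_
            exact hd.mono ((hbsub _ k).trans Set.inter_subset_right)
              ((hbsub _ k').trans Set.inter_subset_right)
          · have h1 : α p.1 '' b p k ⊆ f '' (p.1 : Set (Fin N → ℤ)) := by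
              rw [hαf p.1 _ ((hbsub p k).trans Set.inter_subset_left)]
              exact Set.image_mono ((hbsub p k).trans Set.inter_subset_left)
            have h2 : α p'.1 '' b p' k' ⊆ f '' (p'.1 : Set (Fin N → ℤ)) := by
              rw [hαf p'.1 _ ((hbsub p' k').trans Set.inter_subset_left)]
              exact Set.image_mono ((hbsub p' k').trans Set.inter_subset_left)
            exact (hfMdis p.1 p'.1 hM).mono h1 h2
      · show Disjoint (α p.1 '' b p k) (Q' : Set (Fin N → ℤ))
        rw [Set.disjoint_left]
        intro x hxA hxQ
        exact (hHsub Q' hxQ).2 (hPsubT p k hxA)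
      · show Disjoint (Q : Set (Fin N → ℤ)) (α p'.1 '' b p' k')
        rw [Set.disjoint_left]
        intro x hxQ hxA
        exact (hHsub Q hxQ).2 (hPsubT p' k' hxA)
      · have hQQ : (Q : Set (Fin N → ℤ)) ≠ (Q' : Set (Fin N → ℤ)) := by
          intro hc
          exact hne (by rw [Subtype.ext hc])
        exact hHdis Q.2 Q'.2 hQQ
    · apply Set.Subset.antisymm
      · intro x hx
        by_cases hx1 : x ∈ f '' S
        · obtain ⟨w, hw, rfl⟩ := hx1
          have hw1 : w ∈ ⋃₀ F := by rw [← hFcov]; exact hw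
          obtain ⟨M0, hM0, hwM⟩ := hw1
          have hw2 : w ∈ ⋃₀ F' := by rw [← hF'cov]; exact hw
          obtain ⟨M'0, hM'0, hwM'⟩ := hw2
          have : w ∈ ⋃ k, b (⟨M0, hM0⟩, ⟨M'0, hM'0⟩) k := by
            rw [← heq]
            exact ⟨hwM, hwM'⟩
          obtain ⟨k, hk⟩ := Set.mem_iUnion.mp this
          refine Set.mem_iUnion.mpr ⟨Sum.inl ⟨(⟨M0, hM0⟩, ⟨M'0, hM'0⟩), k⟩, ?_⟩
          show f w ∈ α _ '' b _ k
          refine ⟨w, hk, ?_⟩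
          exact (heF ⟨M0, hM0⟩ w hwM).symm
        · have : x ∈ ⋃₀ H := by rw [← hHcov]; exact ⟨hx, hx1⟩
          obtain ⟨Q0, hQ0, hxQ⟩ := this
          exact Set.mem_iUnion.mpr ⟨Sum.inr ⟨Q0, hQ0⟩, hxQ⟩
      · intro x hx
        obtain ⟨i, hi⟩ := Set.mem_iUnion.mp hx
        rcases i with ⟨p, k⟩ | Q
        · exact hfS (hPsubT p k hi)
        · exact (hHsub Q hi).1
    · rintro (⟨p, k⟩ | Q)
      · obtain ⟨M, M'⟩ := p
        refine ⟨aF' M' - (AF' M' * (AF M).transpose).mulVec (aF M),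
          AF' M' * (AF M).transpose, (hAF' M').mul (hAF M).transpose, ?_⟩
        rintro x ⟨w, hw, rfl⟩
        have hwM : w ∈ (M : Set (Fin N → ℤ)) := (hbsub _ k hw).1
        have hwM' : w ∈ (M' : Set (Fin N → ℤ)) := (hbsub _ k hw).2
        have hwS : w ∈ S := hMsubS M hwM
        have hfw : α M w = f w := (heF M w hwM).symm
        have hg0 : g0 (α M w) = f' w := by
          rw [hfw, hval1 _ ⟨w, hwS, rfl⟩, hu3 w hwS]
        rw [hg0, heF' M' w hwM']
        show aF' M' + (AF' M').mulVec w
          = aF' M' - (AF' M' * (AF M).transpose).mulVec (aF M)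
            + (AF' M' * (AF M).transpose).mulVec (aF M + (AF M).mulVec w)
        have hkey : (AF' M' * (AF M).transpose).mulVec ((AF M).mulVec w)
            = (AF' M').mulVec w := by
          rw [Matrix.mulVec_mulVec, Matrix.mul_assoc, (hAF M).transpose_mul, Matrix.mul_one]
        rw [Matrix.mulVec_add, hkey]
        abel
      · refine (hHiso Q Q.2).congr ?_
        intro x hx
        have := hHsub Q hx
        exact hval2 x this.1 this.2
  refine ⟨Equiv.ofBijective g0 hbij, ⟨?_, ?_⟩, ?_⟩
  · exact hPei
  · intro x hx
    exact hval3 x hx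
  · intro x hx
    show f' x = g0 (f x)
    rw [hval1 _ ⟨x, hx, rfl⟩, hu3 x hx]


/-- two pei-injections of `S` are in the same `pei(S)`-orbit iff the
complements of their images are pei-isomorphic. -/
theorem stmt19 {N : ℕ} (S : Set (Fin N → ℤ)) (hS : IsOrthohedral S)
    (f f' : (Fin N → ℤ) → (Fin N → ℤ))
    (hf : IsPeiMapOn S f) (hfi : Set.InjOn f S) (hfS : f '' S ⊆ S)
    (hf' : IsPeiMapOn S f') (hfi' : Set.InjOn f' S) (hfS' : f' '' S ⊆ S) :
    (∃ g : Equiv.Perm (Fin N → ℤ), IsPeiPerm S g ∧ ∀ x ∈ S, f' x = g (f x)) ↔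
      PeiIsomorphic (S \ (f '' S)) (S \ (f' '' S)) := by
  constructor
  · rintro ⟨g, hg, hfg⟩
    exact stmt19_forward hf hfi hfS g hg hfg
  · intro h
    exact stmt19_backward hf hfi hfS hf' hfi' hfS' h

end PeiPaper
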